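/- Let (A, μ, ∂) be a unital GDQ ring with X ∈ A satisfying ∂X = 1⊗1, and let N = Ker ∂. Define linear maps ψ_k : N^{⊗(k+1)} → A by ψ_k(n₀⊗…⊗n_k) = n₀Xn₁X⋯Xn_k, and iterated comultiplications ∂^{(k)} = (∂⊗id^{⊗(k−1)})∘∂^{(k−1)} with ∂^{(1)} = ∂. Then ∂^{(k)}∘ψ_k = id on N^{⊗(k+1)} and ∂^{(k)}∘ψ_l = 0 for l < k; consequently each ψ_k is injective and the ranges of the ψ_k, k ≥ 0, are linearly independent, so the canonical homomorphism from the algebra N⟨X⟩ of noncommutative polynomials over N into A is injective. -/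

import Mathlib

/- STATEMENT 8: (Proposition 4.5) In a unital GDQ ring (A, μ, ∂) with ∂X = 1⊗1 and
N = Ker ∂, the maps ψ_k(n₀⊗…⊗n_k) = n₀Xn₁X⋯Xn_k satisfy ∂^{(k)} ∘ ψ_k = id on
N^{⊗(k+1)} and ∂^{(k)} ∘ ψ_l = 0 for l < k; consequently the ψ_k are injective and
their ranges are linearly independent, so the canonical homomorphism N⟨X⟩ → A is
injective. -/

open scoped TensorProduct

noncomputable section

variable {A : Type*} [Ring A] [Algebra ℂ A]

/-- The splitting `A ⊗ A^{⊗k} ≃ A^{⊗(k+1)}` (peeling off the first tensor factor). -/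
def stepE (A : Type*) [Ring A] [Algebra ℂ A] (k : ℕ) :
    (A ⊗[ℂ] (⨂[ℂ] _ : Fin k, A)) ≃ₗ[ℂ] (⨂[ℂ] _ : Fin (k + 1), A) :=
  (TensorProduct.congr
      (PiTensorProduct.subsingletonEquiv (0 : Fin 1) : (⨂[ℂ] _ : Fin 1, A) ≃ₗ[ℂ] A).symm
      (LinearEquiv.refl ℂ _)).trans
    ((PiTensorProduct.tmulEquiv ℂ A).trans
      (PiTensorProduct.reindex ℂ (fun _ : Fin 1 ⊕ Fin k => A)
        (finSumFinEquiv.trans (finCongr (Nat.add_comm 1 k)))))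

/-- The iterated comultiplication `∂^{(k)} : A → A^{⊗(k+1)}`,
`∂^{(k)} = (∂ ⊗ id^{⊗(k−1)}) ∘ ∂^{(k−1)}`, `∂^{(0)} = id`, `∂^{(1)} = ∂`. -/
def Dk (D : A →ₗ[ℂ] A ⊗[ℂ] A) : (k : ℕ) → (A →ₗ[ℂ] ⨂[ℂ] _ : Fin (k + 1), A)
  | 0 => ((PiTensorProduct.subsingletonEquiv (0 : Fin 1) :
            (⨂[ℂ] _ : Fin 1, A) ≃ₗ[ℂ] A)).symm.toLinearMap
  | (k + 1) =>
      (stepE A (k + 1)).toLinearMap ∘ₗ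
        (LinearMap.lTensor A (stepE A k).toLinearMap) ∘ₗ
          (TensorProduct.assoc ℂ A A (⨂[ℂ] _ : Fin k, A)).toLinearMap ∘ₗ
            (LinearMap.rTensor (⨂[ℂ] _ : Fin k, A) D) ∘ₗ
              (stepE A k).symm.toLinearMap ∘ₗ (Dk D k)

/-- `ψ_k(n₀, …, n_k) = n₀ X n₁ X ⋯ X n_k`. -/
def psi (X : A) (k : ℕ) (n : Fin (k + 1) → A) : A :=
  n 0 * (List.ofFn fun i : Fin k => X * n i.succ).prod

set_option maxHeartbeats 1000000
set_option synthInstance.maxHeartbeats 1000000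

-- auxiliary lemmas

lemma stepE_tmul (k : ℕ) (a : A) (f : Fin k → A) :
    stepE A k (a ⊗ₜ[ℂ] PiTensorProduct.tprod ℂ f) = PiTensorProduct.tprod ℂ (Fin.cons a f) := by
  have h1 : ((PiTensorProduct.subsingletonEquiv (0 : Fin 1) :
      (⨂[ℂ] _ : Fin 1, A) ≃ₗ[ℂ] A).symm a) = PiTensorProduct.tprod ℂ (fun _ : Fin 1 => a) :=
    PiTensorProduct.subsingletonEquiv_symm_apply' (0 : Fin 1) a
  simp only [stepE, LinearEquiv.trans_apply, TensorProduct.congr_tmul, h1,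
    LinearEquiv.refl_apply, PiTensorProduct.tmulEquiv_apply, PiTensorProduct.reindex_tprod]
  congr 1
  funext i
  refine Fin.cases ?_ (fun j => ?_) i
  · have : (Fin.cast (Nat.add_comm 1 k).symm (0 : Fin (k+1))) = Fin.castAdd k 0 := by ext; simp
    simp [Equiv.symm_trans_apply, this]
  · have : (Fin.cast (Nat.add_comm 1 k).symm j.succ) = Fin.natAdd 1 j := by
      ext; simp [Fin.natAdd, Nat.add_comm]
    simp [Equiv.symm_trans_apply, this]

lemma Dk_zero_apply (D : A →ₗ[ℂ] A ⊗[ℂ] A) (a : A) :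
    Dk D 0 a = PiTensorProduct.tprod ℂ (fun _ : Fin 1 => a) := by
  show ((PiTensorProduct.subsingletonEquiv (0 : Fin 1) :
    (⨂[ℂ] _ : Fin 1, A) ≃ₗ[ℂ] A)).symm a = _
  exact PiTensorProduct.subsingletonEquiv_symm_apply' (0 : Fin 1) a

lemma stepE_symm_Dk_zero (D : A →ₗ[ℂ] A ⊗[ℂ] A) (a : A) :
    (stepE A 0).symm (Dk D 0 a) = a ⊗ₜ[ℂ] PiTensorProduct.tprod ℂ (fun i : Fin 0 => i.elim0) := by
  rw [LinearEquiv.symm_apply_eq, stepE_tmul, Dk_zero_apply]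
  congr 1
  funext i
  refine Fin.cases rfl (fun j => j.elim0) i

lemma tmul_one_mul (c : A) (t : A ⊗[ℂ] A) :
    (c ⊗ₜ[ℂ] (1 : A)) * t = LinearMap.rTensor A (LinearMap.mulLeft ℂ c) t := by
  induction t with
  | zero => simp
  | tmul a b => simp [Algebra.TensorProduct.tmul_mul_tmul]
  | add x y hx hy => rw [mul_add, map_add, hx, hy]

/-- Coassociative recursion for `Dk` peeling on the left. -/
lemma Dk_succ (D : A →ₗ[ℂ] A ⊗[ℂ] A)
    (hco : ∀ a : A, TensorProduct.assoc ℂ A A A (LinearMap.rTensor A D (D a)) =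
      LinearMap.lTensor A D (D a)) (k : ℕ) :
    Dk D (k + 1) = (stepE A (k + 1)).toLinearMap ∘ₗ (LinearMap.lTensor A (Dk D k)) ∘ₗ D := by
  induction k with
  | zero =>
    ext a
    show (stepE A 1) ((LinearMap.lTensor A (stepE A 0).toLinearMap)
        ((TensorProduct.assoc ℂ A A _) ((LinearMap.rTensor _ D)
          ((stepE A 0).symm (Dk D 0 a))))) =
      (stepE A 1) ((LinearMap.lTensor A (Dk D 0)) (D a))
    rw [stepE_symm_Dk_zero, LinearMap.rTensor_tmul]
    have key : ∀ y : A, stepE A 0 (y ⊗ₜ[ℂ] PiTensorProduct.tprod ℂ (fun i : Fin 0 => i.elim0))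
        = Dk D 0 y := by
      intro y
      rw [stepE_tmul, Dk_zero_apply]
      congr 1
      funext i
      refine Fin.cases rfl (fun j => j.elim0) i
    generalize D a = u
    induction u with
    | zero => simp only [TensorProduct.zero_tmul, map_zero]
    | tmul x y =>
      simp only [TensorProduct.assoc_tmul, LinearMap.lTensor_tmul, LinearEquiv.coe_coe, key]
    | add x y hx hy =>
      simp only [TensorProduct.add_tmul, map_add, hx, hy]
  | succ k ih =>
    ext a
    show (stepE A (k + 2)) ((LinearMap.lTensor A (stepE A (k+1)).toLinearMap)
        ((TensorProduct.assoc ℂ A A _) ((LinearMap.rTensor _ D)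
          ((stepE A (k+1)).symm (Dk D (k+1) a))))) =
      (stepE A (k + 2)) ((LinearMap.lTensor A (Dk D (k+1))) (D a))
    have hDk1 : Dk D (k+1) a = (stepE A (k+1)) ((LinearMap.lTensor A (Dk D k)) (D a)) := by
      rw [ih]; rfl
    rw [hDk1, LinearEquiv.symm_apply_apply]
    have h1 : ∀ u : A ⊗[ℂ] A,
        (stepE A (k + 2)) ((LinearMap.lTensor A (stepE A (k+1)).toLinearMap)
          ((TensorProduct.assoc ℂ A A _) ((LinearMap.rTensor _ D)
            ((LinearMap.lTensor A (Dk D k)) u)))) =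
        (stepE A (k + 2)) ((LinearMap.lTensor A (stepE A (k+1)).toLinearMap)
          ((TensorProduct.assoc ℂ A A _) ((LinearMap.lTensor (A ⊗[ℂ] A) (Dk D k))
            ((LinearMap.rTensor A D) u)))) := by
      intro u
      induction u with
      | zero => simp only [map_zero]
      | tmul x y => simp only [LinearMap.lTensor_tmul, LinearMap.rTensor_tmul]
      | add x y hx hy => simp only [map_add, hx, hy]
    rw [h1]
    have hco' : (LinearMap.rTensor A D) (D a) =
        (TensorProduct.assoc ℂ A A A).symm ((LinearMap.lTensor A D) (D a)) := by
      rw [LinearEquiv.eq_symm_apply, hco]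
    rw [hco']
    have h2 : ∀ v : A ⊗[ℂ] (A ⊗[ℂ] A),
        (LinearMap.lTensor (A ⊗[ℂ] A) (Dk D k)) ((TensorProduct.assoc ℂ A A A).symm v)
        = (TensorProduct.assoc ℂ A A (⨂[ℂ] _ : Fin (k+1), A)).symm
            ((LinearMap.lTensor A (LinearMap.lTensor A (Dk D k))) v) := by
      intro v
      have h := TensorProduct.map_map_assoc_symm (LinearMap.id : A →ₗ[ℂ] A)
        (LinearMap.id : A →ₗ[ℂ] A) (Dk D k) v
      rw [TensorProduct.map_id] at h
      exact h
    rw [h2, LinearEquiv.apply_symm_apply]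
    congr 1
    rw [ih]
    rw [show (stepE A (k+1)).toLinearMap ∘ₗ LinearMap.lTensor A (Dk D k) ∘ₗ D
        = ((stepE A (k+1)).toLinearMap ∘ₗ LinearMap.lTensor A (Dk D k)) ∘ₗ D from rfl,
      LinearMap.lTensor_comp]
    simp only [LinearMap.lTensor_comp, LinearMap.coe_comp, Function.comp_apply]

lemma psi_zero (X : A) (n : Fin 1 → A) : psi X 0 n = n 0 := by
  simp [psi]

lemma psi_succ (X : A) (k : ℕ) (n : Fin (k + 2) → A) :
    psi X (k + 1) n = n 0 * (X * psi X k (fun i => n i.succ)) := by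
  simp [psi, List.ofFn_succ, mul_assoc]


lemma D_psi_succ (D : A →ₗ[ℂ] A ⊗[ℂ] A)
    (hder : ∀ a b : A, D (a * b) =
      (a ⊗ₜ[ℂ] (1 : A)) * D b + D a * ((1 : A) ⊗ₜ[ℂ] b))
    (X : A) (hX : D X = (1 : A) ⊗ₜ[ℂ] (1 : A))
    (l : ℕ) (n : Fin (l + 2) → A) (h0 : D (n 0) = 0) :
    D (psi X (l + 1) n) =
      n 0 ⊗ₜ[ℂ] psi X l (fun i => n i.succ) +
      LinearMap.rTensor A (LinearMap.mulLeft ℂ (n 0 * X))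
        (D (psi X l (fun i => n i.succ))) := by
  rw [psi_succ, hder (n 0), h0, zero_mul, add_zero, hder X, hX]
  rw [mul_add, ← mul_assoc, Algebra.TensorProduct.tmul_mul_tmul, mul_one, tmul_one_mul,
    Algebra.TensorProduct.tmul_mul_tmul, Algebra.TensorProduct.tmul_mul_tmul]
  rw [mul_one, mul_one, one_mul, one_mul, add_comm]

lemma key (D : A →ₗ[ℂ] A ⊗[ℂ] A)
    (hder : ∀ a b : A, D (a * b) =
      (a ⊗ₜ[ℂ] (1 : A)) * D b + D a * ((1 : A) ⊗ₜ[ℂ] b))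
    (hco : ∀ a : A, TensorProduct.assoc ℂ A A A (LinearMap.rTensor A D (D a)) =
      LinearMap.lTensor A D (D a))
    (X : A) (hX : D X = (1 : A) ⊗ₜ[ℂ] (1 : A)) (k : ℕ) :
    (∀ n : Fin (k + 1) → A, (∀ i, n i ∈ LinearMap.ker D) →
      Dk D k (psi X k n) = PiTensorProduct.tprod ℂ n) ∧
    (∀ l, l < k → ∀ n : Fin (l + 1) → A, (∀ i, n i ∈ LinearMap.ker D) →
      Dk D k (psi X l n) = 0) := by
  induction k with
  | zero =>
    constructor
    · intro n hn
      rw [psi_zero, Dk_zero_apply]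
      congr 1
      funext i
      have : i = 0 := Fin.ext (by omega)
      rw [this]
    · intro l hl
      exact absurd hl (Nat.not_lt_zero l)
  | succ k ih =>
    have inner0 : ∀ l, l ≤ k → ∀ n : Fin (l + 1) → A, (∀ i, n i ∈ LinearMap.ker D) →
        (LinearMap.lTensor A (Dk D k)) (D (psi X l n)) = 0 := by
      intro l
      induction l with
      | zero =>
        intro _ n hn
        rw [psi_zero, LinearMap.mem_ker.mp (hn 0), map_zero]
      | succ l ihl =>
        intro hl n hn
        have h0 : D (n 0) = 0 := LinearMap.mem_ker.mp (hn 0)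
        rw [D_psi_succ D hder X hX l n h0, map_add, LinearMap.lTensor_tmul]
        have hswap := LinearMap.congr_fun
          ((LinearMap.lTensor_comp_rTensor (f := LinearMap.mulLeft ℂ (n 0 * X)) (g := Dk D k)).trans
            (LinearMap.rTensor_comp_lTensor (f := LinearMap.mulLeft ℂ (n 0 * X)) (g := Dk D k)).symm)
          (D (psi X l (fun i => n i.succ)))
        simp only [LinearMap.coe_comp, Function.comp_apply] at hswap
        rw [hswap, ihl (by omega) (fun i => n i.succ) (fun i => hn i.succ), map_zero, add_zero]
        rw [ih.2 l (by omega) (fun i => n i.succ) (fun i => hn i.succ),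
          TensorProduct.tmul_zero]
    have innerEq : ∀ n : Fin (k + 2) → A, (∀ i, n i ∈ LinearMap.ker D) →
        (LinearMap.lTensor A (Dk D k)) (D (psi X (k + 1) n)) =
          n 0 ⊗ₜ[ℂ] PiTensorProduct.tprod ℂ (fun i : Fin (k + 1) => n i.succ) := by
      intro n hn
      have h0 : D (n 0) = 0 := LinearMap.mem_ker.mp (hn 0)
      rw [D_psi_succ D hder X hX k n h0, map_add, LinearMap.lTensor_tmul]
      have hswap := LinearMap.congr_fun
        ((LinearMap.lTensor_comp_rTensor (f := LinearMap.mulLeft ℂ (n 0 * X)) (g := Dk D k)).trans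
          (LinearMap.rTensor_comp_lTensor (f := LinearMap.mulLeft ℂ (n 0 * X)) (g := Dk D k)).symm)
        (D (psi X k (fun i => n i.succ)))
      simp only [LinearMap.coe_comp, Function.comp_apply] at hswap
      rw [hswap, inner0 k le_rfl (fun i => n i.succ) (fun i => hn i.succ), map_zero, add_zero]
      rw [ih.1 (fun i => n i.succ) (fun i => hn i.succ)]
    constructor
    · intro n hn
      have hD : Dk D (k + 1) (psi X (k + 1) n) =
          (stepE A (k + 1)) ((LinearMap.lTensor A (Dk D k)) (D (psi X (k + 1) n))) := by
        rw [Dk_succ D hco k]; rfl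
      rw [hD, innerEq n hn, stepE_tmul]
      congr 1
      exact Fin.cons_self_tail n
    · intro l hl n hn
      have hD : Dk D (k + 1) (psi X l n) =
          (stepE A (k + 1)) ((LinearMap.lTensor A (Dk D k)) (D (psi X l n))) := by
        rw [Dk_succ D hco k]; rfl
      rw [hD, inner0 l (by omega) n hn, map_zero]


def Phi (X : A) (k : ℕ) : (⨂[ℂ] _ : Fin (k + 1), A) →ₗ[ℂ] A :=
  PiTensorProduct.lift ((MultilinearMap.mkPiAlgebraFin ℂ (k + 1) A).compLinearMap
    (fun i => LinearMap.mulLeft ℂ ((Fin.cons (1 : A) (fun _ => X) : Fin (k + 1) → A) i)))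

lemma Phi_tprod (X : A) (k : ℕ) (n : Fin (k + 1) → A) :
    Phi X k (PiTensorProduct.tprod ℂ n) = psi X k n := by
  simp only [Phi, PiTensorProduct.lift.tprod, MultilinearMap.compLinearMap_apply,
    MultilinearMap.mkPiAlgebraFin_apply, LinearMap.mulLeft_apply]
  simp [psi, List.ofFn_succ, Fin.cons_zero, Fin.cons_succ]

theorem stmt8 (D : A →ₗ[ℂ] A ⊗[ℂ] A)
    -- ∂ is a derivation
    (hder : ∀ a b : A, D (a * b) =
      (a ⊗ₜ[ℂ] (1 : A)) * D b + D a * ((1 : A) ⊗ₜ[ℂ] b))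
    -- ∂ is coassociative
    (hco : ∀ a : A, TensorProduct.assoc ℂ A A A (LinearMap.rTensor A D (D a)) =
      LinearMap.lTensor A D (D a))
    (X : A) (hX : D X = (1 : A) ⊗ₜ[ℂ] (1 : A)) :
    -- ∂^{(k)} ∘ ψ_k = id on N^{⊗(k+1)}
    (∀ (k : ℕ) (n : Fin (k + 1) → A), (∀ i, n i ∈ LinearMap.ker D) →
      Dk D k (psi X k n) = PiTensorProduct.tprod ℂ n) ∧
    -- ∂^{(k)} ∘ ψ_l = 0 for l < k
    (∀ (k l : ℕ), l < k → ∀ n : Fin (l + 1) → A, (∀ i, n i ∈ LinearMap.ker D) →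
      Dk D k (psi X l n) = 0) ∧
    -- the ranges of the ψ_k are linearly independent (hence the canonical
    -- homomorphism ψ : N⟨X⟩ → A is injective)
    (∀ (m : ℕ) (x : ℕ → A),
      (∀ l, x l ∈ Submodule.span ℂ
        {a : A | ∃ n : Fin (l + 1) → A, (∀ i, n i ∈ LinearMap.ker D) ∧ a = psi X l n}) →
      (∑ l ∈ Finset.range (m + 1), x l) = 0 → ∀ l ≤ m, x l = 0) := by
  refine ⟨fun k n hn => (key D hder hco X hX k).1 n hn,
    fun k l hlk n hn => (key D hder hco X hX k).2 l hlk n hn, ?_⟩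
  intro m
  induction m with
  | zero =>
    intro x hx hsum l hl
    have hl0 : l = 0 := by omega
    subst hl0
    simpa using hsum
  | succ m ihm =>
    intro x hx hsum l hl
    have hzero : ∀ j, j ≤ m → Dk D (m + 1) (x j) = 0 := by
      intro j hj
      refine Submodule.span_induction ?_ ?_ ?_ ?_ (hx j)
      · rintro a ⟨n, hn, rfl⟩
        exact (key D hder hco X hX (m + 1)).2 j (by omega) n hn
      · simp
      · intro a b _ _ ha hb; rw [map_add, ha, hb, add_zero]
      · intro c a _ ha; rw [map_smul, ha, smul_zero]
    have hrec : Phi X (m + 1) (Dk D (m + 1) (x (m + 1))) = x (m + 1) := by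
      refine Submodule.span_induction ?_ ?_ ?_ ?_ (hx (m + 1))
      · rintro a ⟨n, hn, rfl⟩
        rw [(key D hder hco X hX (m + 1)).1 n hn, Phi_tprod]
      · simp
      · intro a b _ _ ha hb; rw [map_add, map_add, ha, hb]
      · intro c a _ ha; rw [map_smul, map_smul, ha]
    have hsum' : (∑ j ∈ Finset.range (m + 2), Dk D (m + 1) (x j)) = 0 := by
      rw [← map_sum, hsum, map_zero]
    have htop : Dk D (m + 1) (x (m + 1)) = 0 := by
      rw [Finset.sum_range_succ] at hsum'
      have hz : (∑ j ∈ Finset.range (m + 1), Dk D (m + 1) (x j)) = 0 :=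
        Finset.sum_eq_zero (fun j hj => hzero j (Nat.lt_succ_iff.mp (Finset.mem_range.mp hj)))
      rw [hz, zero_add] at hsum'
      exact hsum'
    have hx1 : x (m + 1) = 0 := by rw [← hrec, htop, map_zero]
    by_cases hl' : l = m + 1
    · rw [hl']; exact hx1
    · have hsum'' : (∑ j ∈ Finset.range (m + 1), x j) = 0 := by
        have h := hsum
        rw [Finset.sum_range_succ, hx1, add_zero] at h
        exact h
      exact ihm x hx hsum'' l (by omega)

end
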